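/- For fixed m ≥ 1 and all d ≥ m, the ratio of the number of DAGs arising as half-squares of acyclic factor graphs with m factors on d variables to the total number of DAGs on d labeled vertices is at most exp(dm + 4d·log(m+d) − (log 2 / 2)·d²); consequently this ratio tends to 0 as d → ∞. -/

import Mathlib

open Filter

/-- A directed graph (given as a relation) is acyclic iff no vertex reaches itself by a
nonempty directed path. -/
def IsAcyclicRel {α : Type*} (R : α → α → Prop) : Prop :=
  ∀ x, ¬ Relation.TransGen R x x

/-- The number of DAGs on `d` labeled vertices. -/
noncomputable def numDAGs (d : ℕ) : ℕ :=
  Nat.card {G : Fin d → Fin d → Bool // IsAcyclicRel (fun a b => G a b = true)}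

/-- The number of graphs on `d` labeled vertices arising as half-squares (over the
variable nodes) of acyclic factor directed graphs with `m` factor nodes. -/
noncomputable def numHalfSquareDAGs (d m : ℕ) : ℕ :=
  Nat.card {G : Fin d → Fin d → Bool //
    ∃ (U : Fin d → Fin m → Bool) (V : Fin m → Fin d → Bool),
      (∀ i j, G i j = true ↔ ∃ k, U i k = true ∧ V k j = true) ∧
      IsAcyclicRel (fun x y : Fin d ⊕ Fin m =>
        match x, y with
        | Sum.inl v, Sum.inr f => U v f = true
        | Sum.inr f, Sum.inl v => V f v = true
        | _, _ => False)}

/-- If a relation admits a strictly monotone potential, it is acyclic. -/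
lemma aux_acyclic_of_lt {α β : Type*} [Preorder β] {R : α → α → Prop} (f : α → β)
    (h : ∀ x y, R x y → f x < f y) : IsAcyclicRel R := by
  intro x hx
  have key : ∀ a b, Relation.TransGen R a b → f a < f b := by
    intro a b hab
    induction hab with
    | single h' => exact h _ _ h'
    | tail _ h' ih => exact ih.trans (h _ _ h')
  exact absurd (key x x hx) (lt_irrefl _)

/-- Topological sort of an acyclic relation on a finite type. -/
lemma aux_exists_topo {α : Type*} [Fintype α] {n : ℕ} (hcard : Fintype.card α = n)
    {R : α → α → Prop} (hR : IsAcyclicRel R) :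
    ∃ σ : α ≃ Fin n, ∀ x y, R x y → σ x < σ y := by
  classical
  set le : α → α → Prop := fun x y => x = y ∨ Relation.TransGen R x y with hle
  haveI : IsPartialOrder α le := by
    refine { refl := fun x => Or.inl rfl, trans := ?_, antisymm := ?_ }
    · rintro a b c (rfl | hab) (rfl | hbc)
      · exact Or.inl rfl
      · exact Or.inr hbc
      · exact Or.inr hab
      · exact Or.inr (hab.trans hbc)
    · rintro a b (rfl | hab) (h | hba)
      · rfl
      · rfl
      · exact h.symm
      · exact absurd (hab.trans hba) (hR a)
  obtain ⟨s, hs, hles⟩ := extend_partialOrder le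
  set lt : α → α → Prop := fun x y => s x y ∧ x ≠ y with hlt
  haveI : IsStrictTotalOrder α lt := by
    refine { trichotomous := ?_, irrefl := ?_, trans := ?_ }
    · intro a b h1 h2
      by_contra hne
      rcases hs.total a b with h | h
      · exact h1 ⟨h, hne⟩
      · exact h2 ⟨h, Ne.symm hne⟩
    · intro a h
      exact h.2 rfl
    · rintro a b c ⟨hab, hne⟩ ⟨hbc, hne'⟩
      refine ⟨hs.trans _ _ _ hab hbc, ?_⟩
      rintro rfl
      exact hne (hs.antisymm _ _ hab hbc)
  haveI : DecidableRel lt := fun a b => Classical.dec _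
  letI : LinearOrder α := linearOrderOfSTO lt
  have e := monoEquivOfFin α hcard
  refine ⟨e.symm.toEquiv, fun x y hxy => ?_⟩
  have hxy' : lt x y := by
    refine ⟨hles x y (Or.inr (Relation.TransGen.single hxy)), ?_⟩
    rintro rfl
    exact hR x (Relation.TransGen.single hxy)
  have : x < y := hxy'
  exact e.symm.strictMono this

/-- Lower bound on the number of DAGs: one fixed topological order already gives
`2 ^ (d(d-1)/2)` DAGs. -/
lemma aux_twoPow_le_numDAGs (d : ℕ) : 2 ^ (d * (d - 1) / 2) ≤ numDAGs d := by
  classical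
  set F : (∀ i : Fin d, Fin (i : ℕ) → Bool) →
      {G : Fin d → Fin d → Bool // IsAcyclicRel (fun a b => G a b = true)} :=
    fun f => ⟨fun i j => if h : (j : ℕ) < (i : ℕ) then f i ⟨j, h⟩ else false, by
      apply aux_acyclic_of_lt (fun i : Fin d => OrderDual.toDual (i : ℕ))
      intro x y hxy
      simp only at hxy
      by_cases h : (y : ℕ) < (x : ℕ)
      · exact h
      · rw [dif_neg h] at hxy; exact absurd hxy (by simp)⟩ with hF
  have hinj : Function.Injective F := by
    intro f g h
    have h1 : (F f).1 = (F g).1 := congrArg Subtype.val h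
    funext i j
    have := congrFun (congrFun h1 i) ⟨(j : ℕ), j.2.trans i.2⟩
    simp only [hF] at this
    rw [dif_pos j.2, dif_pos j.2] at this
    exact this
  have hle := Nat.card_le_card_of_injective F hinj
  rw [Nat.card_eq_fintype_card] at hle
  refine le_trans (le_of_eq ?_) hle
  rw [Fintype.card_pi]
  have : ∀ i : Fin d, Fintype.card (Fin (i : ℕ) → Bool) = 2 ^ (i : ℕ) := by
    intro i; simp [Fintype.card_fun]
  rw [Finset.prod_congr rfl (fun i _ => this i), Finset.prod_pow_eq_pow_sum]
  congr 1
  rw [Fin.sum_univ_eq_sum_range (fun i => i), Finset.sum_range_id]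

/-- Upper bound on the number of half-squares of acyclic factor graphs. -/
lemma aux_numHalfSquareDAGs_le (d m : ℕ) :
    numHalfSquareDAGs d m ≤ (d + m).factorial * 2 ^ (d * m) := by
  classical
  set dec : ((Fin d ⊕ Fin m ≃ Fin (d + m)) × (Fin d → Fin m → Bool)) →
      {G : Fin d → Fin d → Bool //
        ∃ (U : Fin d → Fin m → Bool) (V : Fin m → Fin d → Bool),
          (∀ i j, G i j = true ↔ ∃ k, U i k = true ∧ V k j = true) ∧
          IsAcyclicRel (fun x y : Fin d ⊕ Fin m =>
            match x, y with
            | Sum.inl v, Sum.inr f => U v f = true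
            | Sum.inr f, Sum.inl v => V f v = true
            | _, _ => False)} :=
    fun p =>
      ⟨fun i j => decide (∃ k,
          (p.2 i k && decide (p.1 (Sum.inl i) < p.1 (Sum.inr k))) = true ∧
          (p.2 j k && decide (p.1 (Sum.inr k) < p.1 (Sum.inl j))) = true), by
        refine ⟨fun i k => p.2 i k && decide (p.1 (Sum.inl i) < p.1 (Sum.inr k)),
          fun k j => p.2 j k && decide (p.1 (Sum.inr k) < p.1 (Sum.inl j)), ?_, ?_⟩
        · intro i j; simp only [decide_eq_true_eq]
        · apply aux_acyclic_of_lt p.1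
          rintro (v | f) (w | g) hxy
          · exact absurd hxy id
          · simp only [Bool.and_eq_true, decide_eq_true_eq] at hxy
            exact hxy.2
          · simp only [Bool.and_eq_true, decide_eq_true_eq] at hxy
            exact hxy.2
          · exact absurd hxy id⟩ with hdec
  have hsurj : Function.Surjective dec := by
    rintro ⟨G, U, V, hiff, hac⟩
    obtain ⟨σ, hσ⟩ := aux_exists_topo (n := d + m) (by simp) hac
    set E : Fin d → Fin m → Bool := fun i k => U i k || V k i with hE
    have hU : ∀ i k, (E i k && decide (σ (Sum.inl i) < σ (Sum.inr k))) = U i k := by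
      intro i k
      cases hu : U i k with
      | true =>
        have hlt : σ (Sum.inl i) < σ (Sum.inr k) := hσ (Sum.inl i) (Sum.inr k) hu
        simp [hE, hu, hlt]
      | false =>
        cases hv : V k i with
        | true =>
          have hlt : σ (Sum.inr k) < σ (Sum.inl i) := hσ (Sum.inr k) (Sum.inl i) hv
          simp [hE, hu, hv, asymm hlt]
        | false => simp [hE, hu, hv]
    have hV : ∀ k j, (E j k && decide (σ (Sum.inr k) < σ (Sum.inl j))) = V k j := by
      intro k j
      cases hv : V k j with
      | true =>
        have hlt : σ (Sum.inr k) < σ (Sum.inl j) := hσ (Sum.inr k) (Sum.inl j) hv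
        simp [hE, hv, hlt]
      | false =>
        cases hu : U j k with
        | true =>
          have hlt : σ (Sum.inl j) < σ (Sum.inr k) := hσ (Sum.inl j) (Sum.inr k) hu
          simp [hE, hu, hv, asymm hlt]
        | false => simp [hE, hu, hv]
    refine ⟨(σ, E), ?_⟩
    apply Subtype.ext
    funext i j
    show decide (∃ k,
        (E i k && decide (σ (Sum.inl i) < σ (Sum.inr k))) = true ∧
        (E j k && decide (σ (Sum.inr k) < σ (Sum.inl j))) = true) = G i j
    cases hg : G i j with
    | true =>
      apply decide_eq_true
      obtain ⟨k, hu, hv⟩ := (hiff i j).mp hg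
      exact ⟨k, by rw [hU]; exact hu, by rw [hV]; exact hv⟩
    | false =>
      apply decide_eq_false
      rintro ⟨k, h1, h2⟩
      rw [hU] at h1; rw [hV] at h2
      rw [(hiff i j).mpr ⟨k, h1, h2⟩] at hg
      exact Bool.noConfusion hg
  have hle := Nat.card_le_card_of_surjective dec hsurj
  refine le_trans hle (le_of_eq ?_)
  rw [Nat.card_eq_fintype_card, Fintype.card_prod, Fintype.card_equiv finSumFinEquiv]
  simp [Fintype.card_fun, ← pow_mul, mul_comm]

/-- The key real inequality. -/
lemma aux_real_ineq {m d : ℕ} (hm : 1 ≤ m) (hd : m ≤ d) :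
    ((d + m).factorial * 2 ^ (d * m) : ℝ) / 2 ^ (d * (d - 1) / 2) ≤
      Real.exp (d * m + 4 * d * Real.log (m + d) - Real.log 2 / 2 * d ^ 2) := by
  have hd1 : 1 ≤ d := hm.trans hd
  set L := Real.log (m + d) with hL
  have hdm2 : (2:ℝ) ≤ (m:ℝ) + d := by
    have : (2:ℕ) ≤ m + d := by omega
    exact_mod_cast this
  have hLlog2 : Real.log 2 ≤ L := Real.log_le_log (by norm_num) hdm2
  have hlog2pos : 0 < Real.log 2 := Real.log_pos (by norm_num)
  have hlog2le : Real.log 2 ≤ 1 := by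
    have := Real.log_le_sub_one_of_pos (x := 2) (by norm_num)
    linarith
  have hpos : (0:ℝ) < (m:ℝ) + d := by linarith
  have hA : ((d + m).factorial : ℝ) ≤ Real.exp (2 * d * L) := by
    calc ((d + m).factorial : ℝ) ≤ ((d + m : ℕ) : ℝ) ^ (d + m) := by
          exact_mod_cast Nat.factorial_le_pow (d + m)
      _ ≤ ((d + m : ℕ) : ℝ) ^ (2 * d) := by
          apply pow_le_pow_right₀
          · exact_mod_cast Nat.one_le_iff_ne_zero.mpr (by omega)
          · omega
      _ = Real.exp (2 * d * L) := by
          rw [hL]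
          rw [← Real.exp_log (x := ((d + m : ℕ) : ℝ))
            (by exact_mod_cast Nat.pos_of_ne_zero (by omega)), ← Real.exp_nat_mul]
          push_cast
          ring_nf
  have hB : (2:ℝ) ^ (d * m) = Real.exp ((d * m : ℕ) * Real.log 2) := by
    rw [Real.exp_nat_mul, Real.exp_log (by norm_num)]
  have hD : (2:ℝ) ^ (d * (d - 1) / 2) = Real.exp ((d * (d - 1) / 2 : ℕ) * Real.log 2) := by
    rw [Real.exp_nat_mul, Real.exp_log (by norm_num)]
  have hNcast : ((d * (d - 1) / 2 : ℕ) : ℝ) = ((d:ℝ) ^ 2 - d) / 2 := by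
    have h2 : 2 ∣ d * (d - 1) := by
      rcases Nat.even_or_odd d with h | h
      · exact Dvd.dvd.mul_right h.two_dvd _
      · exact Dvd.dvd.mul_left (Nat.Odd.sub_odd h odd_one).two_dvd _
    rw [Nat.cast_div h2 (by norm_num)]
    rw [Nat.cast_mul, Nat.cast_sub hd1]
    push_cast
    ring
  have key : Real.exp (2 * d * L) * Real.exp ((d * m : ℕ) * Real.log 2) /
      Real.exp ((d * (d - 1) / 2 : ℕ) * Real.log 2) ≤
      Real.exp (d * m + 4 * d * Real.log (m + d) - Real.log 2 / 2 * d ^ 2) := by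
    rw [← Real.exp_add, ← Real.exp_sub, Real.exp_le_exp]
    rw [hNcast]
    push_cast
    rw [← hL]
    have hd0 : (0:ℝ) ≤ d := by positivity
    have hdm0 : (0:ℝ) ≤ (d:ℝ) * m := by positivity
    nlinarith [mul_le_mul_of_nonneg_left hlog2le hdm0,
      mul_le_mul_of_nonneg_left hLlog2 hd0, mul_nonneg hd0 (le_trans hlog2pos.le hLlog2)]
  calc ((d + m).factorial * 2 ^ (d * m) : ℝ) / 2 ^ (d * (d - 1) / 2)
      ≤ Real.exp (2 * d * L) * Real.exp ((d * m : ℕ) * Real.log 2) /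
        Real.exp ((d * (d - 1) / 2 : ℕ) * Real.log 2) := by
        rw [hD]
        gcongr
        exact le_of_eq hB
    _ ≤ _ := key

/-- The exponent tends to `-∞`. -/
lemma aux_tendsto_atBot (m : ℕ) :
    Tendsto (fun x : ℝ => x * m + 4 * x * Real.log (m + x) - Real.log 2 / 2 * x ^ 2)
      atTop atBot := by
  have hlog2pos : 0 < Real.log 2 := Real.log_pos (by norm_num)
  have hshift : Tendsto (fun x : ℝ => (m:ℝ) + x) atTop atTop :=
    tendsto_atTop_add_const_left atTop (m:ℝ) tendsto_id
  have o1 : (fun x : ℝ => Real.log ((m:ℝ) + x)) =o[atTop] (fun x => (m:ℝ) + x) :=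
    Real.isLittleO_log_id_atTop.comp_tendsto hshift
  have O2 : (fun x : ℝ => (m:ℝ) + x) =O[atTop] (fun x : ℝ => x) := by
    have h1 : (fun _ : ℝ => (m:ℝ)) =O[atTop] (fun x : ℝ => x) :=
      (Asymptotics.isLittleO_const_id_atTop (m:ℝ)).isBigO
    simpa using h1.add (Asymptotics.isBigO_refl (fun x : ℝ => x) atTop)
  have o3 : (fun x : ℝ => Real.log ((m:ℝ) + x)) =o[atTop] (fun x : ℝ => x) :=
    o1.trans_isBigO O2
  have hlim : Tendsto (fun x : ℝ => (m:ℝ) / x + 4 * (Real.log ((m:ℝ) + x) / x) -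
      Real.log 2 / 2) atTop (nhds ((0:ℝ) + 4 * 0 - Real.log 2 / 2)) := by
    exact ((tendsto_const_nhds.div_atTop tendsto_id).add
      ((o3.tendsto_div_nhds_zero).const_mul 4)).sub tendsto_const_nhds
  have hsq : Tendsto (fun x : ℝ => x ^ 2) atTop atTop := tendsto_pow_atTop (by norm_num)
  have hmain : Tendsto (fun x : ℝ => x ^ 2 * ((m:ℝ) / x + 4 * (Real.log ((m:ℝ) + x) / x) -
      Real.log 2 / 2)) atTop atBot := by
    apply Tendsto.atTop_mul_neg (C := (0:ℝ) + 4 * 0 - Real.log 2 / 2) (by linarith) hsq hlim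
  apply hmain.congr'
  filter_upwards [eventually_gt_atTop (0:ℝ)] with x hx
  field_simp

/-- For fixed `m ≥ 1` and all `d ≥ m`, the ratio of the number of half-squares of acyclic
factor graphs with `m` factors on `d` variables to the total number of DAGs on `d` labeled
vertices is at most `exp(dm + 4d·log(m+d) − (log 2 / 2)·d²)`; consequently the ratio tends
to `0` as `d → ∞`. -/
theorem ratio_halfSquareDAGs_le {m : ℕ} (hm : 1 ≤ m) :
    (∀ d : ℕ, m ≤ d →
      (numHalfSquareDAGs d m : ℝ) / numDAGs d ≤
        Real.exp (d * m + 4 * d * Real.log (m + d) - Real.log 2 / 2 * d ^ 2)) ∧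
    Tendsto (fun d : ℕ => (numHalfSquareDAGs d m : ℝ) / numDAGs d) atTop (nhds 0) := by
  have hpart1 : ∀ d : ℕ, m ≤ d →
      (numHalfSquareDAGs d m : ℝ) / numDAGs d ≤
        Real.exp (d * m + 4 * d * Real.log (m + d) - Real.log 2 / 2 * d ^ 2) := by
    intro d hd
    have hnum : (numHalfSquareDAGs d m : ℝ) ≤ ((d + m).factorial * 2 ^ (d * m) : ℝ) := by
      exact_mod_cast aux_numHalfSquareDAGs_le d m
    have hden : ((2:ℝ) ^ (d * (d - 1) / 2)) ≤ (numDAGs d : ℝ) := by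
      exact_mod_cast aux_twoPow_le_numDAGs d
    have h1 : (numHalfSquareDAGs d m : ℝ) / numDAGs d ≤
        ((d + m).factorial * 2 ^ (d * m) : ℝ) / 2 ^ (d * (d - 1) / 2) :=
      div_le_div₀ (by positivity) hnum (by positivity) hden
    exact h1.trans (aux_real_ineq hm hd)
  refine ⟨hpart1, ?_⟩
  have hFn : Tendsto (fun d : ℕ =>
      Real.exp ((d:ℝ) * m + 4 * d * Real.log (m + d) - Real.log 2 / 2 * (d:ℝ) ^ 2))
      atTop (nhds 0) :=
    Real.tendsto_exp_atBot.comp ((aux_tendsto_atBot m).comp tendsto_natCast_atTop_atTop)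
  refine tendsto_of_tendsto_of_tendsto_of_le_of_le' tendsto_const_nhds hFn ?_ ?_
  · exact Eventually.of_forall fun d => by positivity
  · filter_upwards [eventually_ge_atTop m] with d hd
    exact hpart1 d hd
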